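/- Let ψ₄ be the morphism with ψ₄(0) = 0, ψ₄(1) = 10, and ψ₇ the morphism with ψ₇(0) = 10, ψ₇(1) = 1. (i) For every Sturm number α — an irrational quadratic number in (0,1) with α² = bα + c for rationals b, c and algebraic conjugate ᾱ = b − α satisfying ᾱ ∉ [0,1] — there exists a morphism ψ ≠ identity in the monoid ⟨ψ₄,ψ₇⟩ such that ψ fixes the Sturmian word s'_{α,0}. (ii) Conversely, for every ψ = ψ_{i₁}∘⋯∘ψ_{iₘ} with each iₖ ∈ {4,7}, at least one iₖ = 4 and at least one iₖ = 7, there exists an irrational α ∈ (0,1) such that ψ fixes s'_{α,0}. -/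

import Mathlib

/-- A morphism of the free monoid `{0,1}*`, determined by the images of the two
letters (`false` encodes the letter 0, `true` encodes the letter 1). -/
abbrev Morph := Bool → List Bool

/-- The identity morphism. -/
def idm : Morph := fun a => [a]

/-- Composition of morphisms: `(M σ τ)(a) = σ(τ(a))`. -/
def M (σ τ : Morph) : Morph := fun a => (τ a).flatMap σ

/-- `compAll g [i₁, …, iₙ] = g i₁ ∘ g i₂ ∘ ⋯ ∘ g iₙ` (the identity for `n = 0`). -/
def compAll (g : Bool → Morph) (l : List Bool) : Morph :=
  l.foldr (fun i acc => M (g i) acc) idm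

/-- Iterated composition of a morphism with itself. -/
def mpow (σ : Morph) : ℕ → Morph
  | 0 => idm
  | k + 1 => M σ (mpow σ k)

/-- The length-`n` prefix of an infinite word. -/
def wpref (w : ℕ → Bool) (n : ℕ) : List Bool := (List.range n).map w

/-- `σ` fixes the infinite word `w`: for every `n`, the finite word
`σ(w(0))σ(w(1))⋯σ(w(n-1))` is a prefix of `w`. -/
def Fixes (σ : Morph) (w : ℕ → Bool) : Prop :=
  ∀ n : ℕ, (wpref w n).flatMap σ = wpref w ((wpref w n).flatMap σ).length

/-- The integer value `⌊(n+1)α + ρ⌋ - ⌊nα + ρ⌋` of the Sturmian word `s_{α,ρ}`. -/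
noncomputable def sfl (α ρ : ℝ) (n : ℕ) : ℤ :=
  ⌊((n : ℝ) + 1) * α + ρ⌋ - ⌊(n : ℝ) * α + ρ⌋

/-- The integer value `⌈(n+1)α + ρ⌉ - ⌈nα + ρ⌉` of the Sturmian word `s'_{α,ρ}`. -/
noncomputable def scl (α ρ : ℝ) (n : ℕ) : ℤ :=
  ⌈((n : ℝ) + 1) * α + ρ⌉ - ⌈(n : ℝ) * α + ρ⌉

/-- The Sturmian word `s_{α,ρ}` as an infinite binary word. -/
noncomputable def sw (α ρ : ℝ) : ℕ → Bool := fun n => decide (sfl α ρ n = 1)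

/-- The Sturmian word `s'_{α,ρ}` as an infinite binary word. -/
noncomputable def sw' (α ρ : ℝ) : ℕ → Bool := fun n => decide (scl α ρ n = 1)

/-- The characteristic word `c_α = s_{α,α}`. -/
noncomputable def cw (α : ℝ) : ℕ → Bool := sw α α

/-- `ψ₁ : 0 → 01, 1 → 0` (the Fibonacci morphism, `φ₁`). -/
def psi1 : Morph := fun a => match a with | false => [false, true] | true => [false]

/-- `ψ₃ : 0 → 0, 1 → 01` (the morphism `G`, i.e. `φ₀`). -/
def psi3 : Morph := fun a => match a with | false => [false] | true => [false, true]

/-- `ψ₄ : 0 → 0, 1 → 10`. -/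
def psi4 : Morph := fun a => match a with | false => [false] | true => [true, false]

/-- `ψ₇ : 0 → 10, 1 → 1`. -/
def psi7 : Morph := fun a => match a with | false => [true, false] | true => [true]

/-- `ψ₈ : 0 → 01, 1 → 1`. -/
def psi8 : Morph := fun a => match a with | false => [false, true] | true => [true]

/-- Time reversal of a morphism. -/
def trev (σ : Morph) : Morph := fun a => (σ a).reverse

/-- The exchange morphism `E : 0 → 1, 1 → 0`. -/
def Em : Morph := fun a => [!a]

/-- Generators `φ₀, φ₁` indexed by a bit: `false ↦ φ₀ (= ψ₃)`, `true ↦ φ₁ (= ψ₁)`. -/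
def phiGen : Bool → Morph := fun b => match b with | false => psi3 | true => psi1

/-- Generators of `⟨ψ₁, ψ₃⟩`: `false` encodes the index 1 (`ψ₁`),
`true` encodes the index 3 (`ψ₃`). -/
def g13 : Bool → Morph := fun b => match b with | false => psi1 | true => psi3

/-- Generators of `⟨ψ₃, ψ₈⟩`: `false ↦ ψ₃`, `true ↦ ψ₈`. -/
def g38 : Bool → Morph := fun b => match b with | false => psi3 | true => psi8

/-- Generators of `⟨ψ₄, ψ₇⟩`: `false ↦ ψ₄`, `true ↦ ψ₇`. -/
def g47 : Bool → Morph := fun b => match b with | false => psi4 | true => psi7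

/-- The Kepler matrices `K₀ = [[1,0],[1,1]]` and `K₁ = [[0,1],[1,1]]`. -/
def K : Bool → Matrix (Fin 2) (Fin 2) ℕ
  | false => !![1, 0; 1, 1]
  | true => !![0, 1; 1, 1]

/-! ### Basic prefix and morphism-action machinery -/

lemma wpref_length (w : ℕ → Bool) (n : ℕ) : (wpref w n).length = n := by
  simp [wpref]

lemma wpref_succ (w : ℕ → Bool) (n : ℕ) :
    wpref w (n + 1) = wpref w n ++ [w n] := by
  simp [wpref, List.range_succ]

/-- `σ` maps prefixes of `u` to prefixes of `v`. -/
def Maps (σ : Morph) (u v : ℕ → Bool) : Prop :=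
  ∀ n : ℕ, ∃ m : ℕ, (wpref u n).flatMap σ = wpref v m

lemma fixes_of_maps {σ : Morph} {w : ℕ → Bool} (h : Maps σ w w) : Fixes σ w := by
  intro n
  obtain ⟨m, hm⟩ := h n
  rw [hm, wpref_length]

lemma maps_idm (u : ℕ → Bool) : Maps idm u u := by
  intro n; exact ⟨n, (List.flatMap_singleton' _).symm ▸ rfl⟩

lemma maps_comp {σ τ : Morph} {u v w : ℕ → Bool}
    (hτ : Maps τ u v) (hσ : Maps σ v w) : Maps (M σ τ) u w := by
  intro n
  obtain ⟨m, hm⟩ := hτ n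
  obtain ⟨k, hk⟩ := hσ m
  refine ⟨k, ?_⟩
  have : (wpref u n).flatMap (M σ τ) = ((wpref u n).flatMap τ).flatMap σ := by
    rw [List.flatMap_assoc]; rfl
  rw [this, hm, hk]

/-! ### Ceiling sequences -/

/-- `cc β n = ⌈nβ⌉`. -/
noncomputable def cc (β : ℝ) (n : ℕ) : ℤ := ⌈(n : ℝ) * β⌉

lemma cc_zero (β : ℝ) : cc β 0 = 0 := by simp [cc]

lemma cc_nonneg {β : ℝ} (h0 : 0 < β) (n : ℕ) : 0 ≤ cc β n :=
  Int.ceil_nonneg (by positivity)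

lemma le_cc (β : ℝ) (n : ℕ) : (n : ℝ) * β ≤ (cc β n : ℝ) := Int.le_ceil _

lemma cc_lt (β : ℝ) (n : ℕ) : (cc β n : ℝ) < (n : ℝ) * β + 1 :=
  Int.ceil_lt_add_one _

lemma cc_le_n {β : ℝ} (h1 : β < 1) (n : ℕ) : cc β n ≤ (n : ℤ) := by
  apply Int.ceil_le.2
  push_cast
  nlinarith [Nat.cast_nonneg (α := ℝ) n]

lemma cc_succ_cases {β : ℝ} (h0 : 0 < β) (h1 : β < 1) (n : ℕ) :
    cc β (n + 1) = cc β n ∨ cc β (n + 1) = cc β n + 1 := by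
  have hmono : cc β n ≤ cc β (n + 1) := by
    apply Int.ceil_le_ceil
    push_cast; nlinarith
  have hle : cc β (n + 1) ≤ cc β n + 1 := by
    have : ((n : ℝ) + 1) * β ≤ (n : ℝ) * β + 1 := by nlinarith
    calc cc β (n + 1) = ⌈((n : ℝ) + 1) * β⌉ := by rw [cc]; push_cast; ring_nf
    _ ≤ ⌈(n : ℝ) * β + 1⌉ := Int.ceil_le_ceil this
    _ = cc β n + 1 := by rw [cc, Int.ceil_add_one]
  omega

lemma scl_eq_cc (α : ℝ) (n : ℕ) : scl α 0 n = cc α (n + 1) - cc α n := by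
  unfold scl cc
  push_cast
  norm_num

lemma sw'_false_iff {β : ℝ} (h0 : 0 < β) (h1 : β < 1) (n : ℕ) :
    sw' β 0 n = false ↔ cc β (n + 1) = cc β n := by
  unfold sw'
  rw [scl_eq_cc]
  rcases cc_succ_cases h0 h1 n with h | h <;> simp [h]

lemma sw'_true_iff {β : ℝ} (h0 : 0 < β) (h1 : β < 1) (n : ℕ) :
    sw' β 0 n = true ↔ cc β (n + 1) = cc β n + 1 := by
  unfold sw'
  rw [scl_eq_cc]
  rcases cc_succ_cases h0 h1 n with h | h <;> simp [h]

/-! ### The `ψ₄` substitution lemma -/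

lemma psi4_maps {β : ℝ} (h0 : 0 < β) (h1 : β < 1) :
    ∀ n : ℕ, (wpref (sw' β 0) n).flatMap psi4
      = wpref (sw' (β / (1 + β)) 0) (n + (cc β n).toNat) := by
  set α := β / (1 + β) with hα
  have hd : (0 : ℝ) < 1 + β := by linarith
  have hα0 : 0 < α := by positivity
  have hα1 : α < 1 := by rw [hα, div_lt_one hd]; linarith
  -- cast helper
  have hcast : ∀ k : ℕ, ((k + (cc β k).toNat : ℕ) : ℝ) = (k : ℝ) + (cc β k : ℝ) := by
    intro k
    have h : ((cc β k).toNat : ℤ) = cc β k := Int.toNat_of_nonneg (cc_nonneg h0 k)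
    push_cast
    conv_rhs => rw [← h]
    push_cast
    ring
  -- A1
  have A1 : ∀ k : ℕ, cc α (k + (cc β k).toNat) = cc β k := by
    intro k
    show ⌈((k + (cc β k).toNat : ℕ) : ℝ) * α⌉ = cc β k
    rw [hcast k, Int.ceil_eq_iff]
    have h1k := le_cc β k
    have h2k := cc_lt β k
    constructor
    · rw [hα, mul_div_assoc', lt_div_iff₀ hd]
      push_cast
      nlinarith
    · rw [hα, mul_div_assoc', div_le_iff₀ hd]
      nlinarith
  -- A2
  have A2 : ∀ k : ℕ, cc β (k + 1) = cc β k + 1 →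
      cc α (k + (cc β k).toNat + 1) = cc β k + 1 := by
    intro k hk
    show ⌈((k + (cc β k).toNat + 1 : ℕ) : ℝ) * α⌉ = cc β k + 1
    have hcast2 : ((k + (cc β k).toNat + 1 : ℕ) : ℝ) = ((k + (cc β k).toNat : ℕ) : ℝ) + 1 := by
      push_cast; ring
    have hlt : (cc β k : ℝ) < ((k : ℝ) + 1) * β := by
      have : cc β k < cc β (k + 1) := by omega
      have := Int.lt_ceil.mp (by
        show cc β k < ⌈((k + 1 : ℕ) : ℝ) * β⌉
        exact this)
      push_cast at this
      linarith [this]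
    have h1k := le_cc β k
    rw [hcast2, hcast k, Int.ceil_eq_iff]
    constructor
    · rw [hα, mul_div_assoc', lt_div_iff₀ hd]
      push_cast
      nlinarith
    · rw [hα, mul_div_assoc', div_le_iff₀ hd]
      push_cast
      nlinarith
  intro n
  induction n with
  | zero => simp [wpref, cc]
  | succ n ih =>
    rw [wpref_succ, List.flatMap_append, ih, List.flatMap_singleton]
    cases hw : sw' β 0 n with
    | false =>
      have hc : cc β (n + 1) = cc β n := (sw'_false_iff h0 h1 n).mp hw
      have hM : n + 1 + (cc β (n + 1)).toNat = (n + (cc β n).toNat) + 1 := by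
        rw [hc]; omega
      rw [hM, wpref_succ]
      have hw' : sw' α 0 (n + (cc β n).toNat) = false := by
        rw [sw'_false_iff hα0 hα1]
        have e1 : cc α (n + (cc β n).toNat + 1) = cc β n := by
          have := A1 (n + 1)
          rw [hc] at this
          rw [← this]
          congr 1
          omega
        rw [e1, A1 n]
      rw [hw']
      rfl
    | true =>
      have hc : cc β (n + 1) = cc β n + 1 := (sw'_true_iff h0 h1 n).mp hw
      have hnn := cc_nonneg h0 n
      have hM : n + 1 + (cc β (n + 1)).toNat = (n + (cc β n).toNat) + 2 := by
        rw [hc]; omega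
      rw [hM, wpref_succ, wpref_succ]
      have e0 : cc α (n + (cc β n).toNat) = cc β n := A1 n
      have e1 : cc α (n + (cc β n).toNat + 1) = cc β n + 1 := A2 n hc
      have e2 : cc α (n + (cc β n).toNat + 2) = cc β n + 1 := by
        have := A1 (n + 1)
        rw [hc] at this
        rw [← this]
        congr 1
        omega
      have hw1 : sw' α 0 (n + (cc β n).toNat) = true := by
        rw [sw'_true_iff hα0 hα1, e1, e0]
      have hw2 : sw' α 0 (n + (cc β n).toNat + 1) = false := by
        rw [sw'_false_iff hα0 hα1, e2, e1]
      rw [hw1, hw2]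
      show _ ++ psi4 true = (_ ++ [true]) ++ [false]
      rw [List.append_assoc]
      rfl
/-! ### The `ψ₇` substitution lemma -/

lemma psi7_maps {β : ℝ} (h0 : 0 < β) (h1 : β < 1) :
    ∀ n : ℕ, (wpref (sw' β 0) n).flatMap psi7
      = wpref (sw' (1 / (2 - β)) 0) (2 * n - (cc β n).toNat) := by
  set α := 1 / (2 - β) with hα
  have hd : (0 : ℝ) < 2 - β := by linarith
  have hα0 : 0 < α := by positivity
  have hα1 : α < 1 := by rw [hα, div_lt_one hd]; linarith
  have hccn : ∀ k : ℕ, (cc β k).toNat ≤ k := by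
    intro k
    have := cc_le_n h1 k
    omega
  have hcast : ∀ k : ℕ, ((2 * k - (cc β k).toNat : ℕ) : ℝ) = 2 * (k : ℝ) - (cc β k : ℝ) := by
    intro k
    have h2 := hccn k
    have h : ((cc β k).toNat : ℤ) = cc β k := Int.toNat_of_nonneg (cc_nonneg h0 k)
    have : ((2 * k - (cc β k).toNat : ℕ) : ℤ) = 2 * (k : ℤ) - cc β k := by omega
    calc ((2 * k - (cc β k).toNat : ℕ) : ℝ) = (((2 * k - (cc β k).toNat : ℕ) : ℤ) : ℝ) := by
          push_cast; ring
    _ = ((2 * (k : ℤ) - cc β k : ℤ) : ℝ) := by rw [this]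
    _ = 2 * (k : ℝ) - (cc β k : ℝ) := by push_cast; ring
  -- B1
  have B1 : ∀ k : ℕ, cc α (2 * k - (cc β k).toNat) = (k : ℤ) := by
    intro k
    show ⌈((2 * k - (cc β k).toNat : ℕ) : ℝ) * α⌉ = (k : ℤ)
    rw [hcast k, Int.ceil_eq_iff]
    have h1k := le_cc β k
    have h2k := cc_lt β k
    constructor
    · rw [hα, mul_one_div, lt_div_iff₀ hd]
      push_cast
      nlinarith
    · rw [hα, mul_one_div, div_le_iff₀ hd]
      push_cast
      nlinarith
  -- B2 : the `0` case
  have B2 : ∀ k : ℕ, cc β (k + 1) = cc β k →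
      cc α (2 * k - (cc β k).toNat + 1) = (k : ℤ) + 1 := by
    intro k hk
    show ⌈((2 * k - (cc β k).toNat + 1 : ℕ) : ℝ) * α⌉ = (k : ℤ) + 1
    have hcast2 : ((2 * k - (cc β k).toNat + 1 : ℕ) : ℝ)
        = ((2 * k - (cc β k).toNat : ℕ) : ℝ) + 1 := by push_cast; ring
    have hle : ((k : ℝ) + 1) * β ≤ (cc β k : ℝ) := by
      have := Int.ceil_le.mp (le_of_eq hk)
      push_cast at this
      linarith
    have h2k := cc_lt β k
    rw [hcast2, hcast k, Int.ceil_eq_iff]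
    constructor
    · rw [hα, mul_one_div, lt_div_iff₀ hd]
      push_cast
      nlinarith
    · rw [hα, mul_one_div, div_le_iff₀ hd]
      push_cast
      nlinarith
  intro n
  induction n with
  | zero => simp [wpref, cc]
  | succ n ih =>
    rw [wpref_succ, List.flatMap_append, ih, List.flatMap_singleton]
    have hnn := cc_nonneg h0 n
    have hcn := hccn n
    have hcn1 := hccn (n + 1)
    cases hw : sw' β 0 n with
    | false =>
      have hc : cc β (n + 1) = cc β n := (sw'_false_iff h0 h1 n).mp hw
      have hM : 2 * (n + 1) - (cc β (n + 1)).toNat = (2 * n - (cc β n).toNat) + 2 := by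
        rw [hc]; omega
      rw [hM, wpref_succ, wpref_succ]
      have e0 : cc α (2 * n - (cc β n).toNat) = (n : ℤ) := B1 n
      have e1 : cc α (2 * n - (cc β n).toNat + 1) = (n : ℤ) + 1 := B2 n hc
      have e2 : cc α (2 * n - (cc β n).toNat + 2) = (n : ℤ) + 1 := by
        have := B1 (n + 1)
        rw [hM] at this
        rw [this]
        push_cast
        ring
      have hw1 : sw' α 0 (2 * n - (cc β n).toNat) = true := by
        rw [sw'_true_iff hα0 hα1, e1, e0]
      have hw2 : sw' α 0 (2 * n - (cc β n).toNat + 1) = false := by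
        rw [sw'_false_iff hα0 hα1, e2, e1]
      rw [hw1, hw2]
      show _ ++ psi7 false = (_ ++ [true]) ++ [false]
      rw [List.append_assoc]
      rfl
    | true =>
      have hc : cc β (n + 1) = cc β n + 1 := (sw'_true_iff h0 h1 n).mp hw
      have hM : 2 * (n + 1) - (cc β (n + 1)).toNat = (2 * n - (cc β n).toNat) + 1 := by
        rw [hc]; omega
      rw [hM, wpref_succ]
      have e0 : cc α (2 * n - (cc β n).toNat) = (n : ℤ) := B1 n
      have e1 : cc α (2 * n - (cc β n).toNat + 1) = (n : ℤ) + 1 := by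
        have := B1 (n + 1)
        rw [hM] at this
        rw [this]
        push_cast
        ring
      have hw1 : sw' α 0 (2 * n - (cc β n).toNat) = true := by
        rw [sw'_true_iff hα0 hα1, e1, e0]
      rw [hw1]
      rfl
/-! ### The Möbius maps attached to the generators -/

noncomputable def fmap : Bool → ℝ → ℝ
  | false, x => x / (1 + x)
  | true, x => 1 / (2 - x)

noncomputable def Fl (l : List Bool) (x : ℝ) : ℝ := l.foldr (fun i y => fmap i y) x

@[simp] lemma Fl_nil (x : ℝ) : Fl [] x = x := rfl

@[simp] lemma Fl_cons (i : Bool) (l : List Bool) (x : ℝ) :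
    Fl (i :: l) x = fmap i (Fl l x) := rfl

lemma Fl_append (l₁ l₂ : List Bool) (x : ℝ) :
    Fl (l₁ ++ l₂) x = Fl l₁ (Fl l₂ x) := by
  induction l₁ with
  | nil => rfl
  | cons i l ih => simp [ih]

lemma compAll_cons (g : Bool → Morph) (i : Bool) (l : List Bool) :
    compAll g (i :: l) = M (g i) (compAll g l) := rfl

lemma fmap_pos {x : ℝ} (i : Bool) (h0 : 0 < x) (h1 : x < 1) : 0 < fmap i x := by
  cases i <;> simp only [fmap]
  · positivity
  · have : (0:ℝ) < 2 - x := by linarith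
    positivity

lemma fmap_lt_one {x : ℝ} (i : Bool) (h0 : 0 < x) (h1 : x < 1) : fmap i x < 1 := by
  cases i <;> simp only [fmap]
  · rw [div_lt_one (by linarith)]; linarith
  · rw [div_lt_one (by linarith)]; linarith

lemma fmap_maps {x : ℝ} (i : Bool) (h0 : 0 < x) (h1 : x < 1) :
    Maps (g47 i) (sw' x 0) (sw' (fmap i x) 0) := by
  cases i
  · intro n
    exact ⟨n + (cc x n).toNat, psi4_maps h0 h1 n⟩
  · intro n
    exact ⟨2 * n - (cc x n).toNat, psi7_maps h0 h1 n⟩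

lemma Fl_maps (l : List Bool) {x : ℝ} (h0 : 0 < x) (h1 : x < 1) :
    (0 < Fl l x ∧ Fl l x < 1) ∧ Maps (compAll g47 l) (sw' x 0) (sw' (Fl l x) 0) := by
  induction l with
  | nil => exact ⟨⟨h0, h1⟩, maps_idm _⟩
  | cons i l ih =>
    obtain ⟨⟨hy0, hy1⟩, hmaps⟩ := ih
    refine ⟨⟨fmap_pos i hy0 hy1, fmap_lt_one i hy0 hy1⟩, ?_⟩
    rw [compAll_cons, Fl_cons]
    exact maps_comp hmaps (fmap_maps i hy0 hy1)

lemma fixes_of_fixed_point (l : List Bool) {x : ℝ} (h0 : 0 < x) (h1 : x < 1)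
    (hfix : Fl l x = x) : Fixes (compAll g47 l) (sw' x 0) := by
  have h := (Fl_maps l h0 h1).2
  rw [hfix] at h
  exact fixes_of_maps h

/-! ### Non-identity -/

lemma mem_compAll_self (l : List Bool) (a : Bool) : a ∈ compAll g47 l a := by
  induction l with
  | nil => simp [compAll, idm]
  | cons i l ih =>
    rw [compAll_cons]
    show a ∈ (compAll g47 l a).flatMap (g47 i)
    rw [List.mem_flatMap]
    refine ⟨a, ih, ?_⟩
    cases i <;> cases a <;> simp [g47, psi4, psi7]

lemma compAll_ne_idm {l : List Bool} (hl : l ≠ []) : compAll g47 l ≠ idm := by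
  obtain ⟨i, l', rfl⟩ : ∃ i l', l = i :: l' := by
    cases l with
    | nil => exact absurd rfl hl
    | cons i l' => exact ⟨i, l', rfl⟩
  set a : Bool := !i with ha
  have hmem : a ∈ compAll g47 l' a := mem_compAll_self l' a
  obtain ⟨s, t, hst⟩ := List.append_of_mem hmem
  have hlen : 2 ≤ ((compAll g47 (i :: l')) a).length := by
    rw [compAll_cons]
    show 2 ≤ ((compAll g47 l' a).flatMap (g47 i)).length
    rw [hst]
    rw [List.flatMap_append, List.flatMap_cons]
    simp only [List.length_append]
    have : (g47 i a).length = 2 := by cases i <;> simp [ha, g47, psi4, psi7]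
    omega
  intro h
  rw [h] at hlen
  simp [idm] at hlen
/-! ### Range and continuity of `Fl` -/

lemma fmap_mem_Icc {x : ℝ} (i : Bool) (hx : x ∈ Set.Icc (0:ℝ) 1) :
    fmap i x ∈ Set.Icc (0:ℝ) 1 := by
  obtain ⟨h0, h1⟩ := hx
  cases i <;> simp only [fmap] <;> constructor
  · positivity
  · rw [div_le_one (by linarith)]; linarith
  · have h2 : (0:ℝ) < 2 - x := by linarith
    positivity
  · rw [div_le_one (by linarith)]; linarith

lemma Fl_mem_Icc (l : List Bool) {x : ℝ} (hx : x ∈ Set.Icc (0:ℝ) 1) :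
    Fl l x ∈ Set.Icc (0:ℝ) 1 := by
  induction l with
  | nil => exact hx
  | cons i l ih => exact fmap_mem_Icc i ih

lemma fmap_contOn (i : Bool) : ContinuousOn (fmap i) (Set.Icc (0:ℝ) 1) := by
  cases i
  · exact ContinuousOn.div continuousOn_id (by fun_prop)
      (fun x hx => by have := hx.1; dsimp; linarith)
  · exact ContinuousOn.div continuousOn_const (by fun_prop)
      (fun x hx => by have := hx.2; dsimp; linarith)

lemma Fl_contOn (l : List Bool) : ContinuousOn (Fl l) (Set.Icc (0:ℝ) 1) := by
  induction l with
  | nil => exact continuousOn_id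
  | cons i l ih =>
    exact ContinuousOn.comp (fmap_contOn i) ih (fun x hx => Fl_mem_Icc l hx)

lemma Fl_zero_pos {l : List Bool} (ht : true ∈ l) : 0 < Fl l 0 := by
  induction l with
  | nil => simp at ht
  | cons i l ih =>
    have hy := Fl_mem_Icc l (x := 0) (by norm_num)
    cases i
    · have ht' : true ∈ l := by simpa using ht
      have := ih ht'
      show 0 < Fl l 0 / (1 + Fl l 0)
      have := hy.2
      positivity
    · show 0 < 1 / (2 - Fl l 0)
      have := hy.2
      have h2 : (0:ℝ) < 2 - Fl l 0 := by linarith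
      positivity

lemma Fl_one_lt {l : List Bool} (hf : false ∈ l) : Fl l 1 < 1 := by
  induction l with
  | nil => simp at hf
  | cons i l ih =>
    have hy := Fl_mem_Icc l (x := 1) (by norm_num)
    cases i
    · show Fl l 1 / (1 + Fl l 1) < 1
      rw [div_lt_one (by linarith [hy.1])]
      linarith [hy.1]
    · have hf' : false ∈ l := by simpa using hf
      have := ih hf'
      show 1 / (2 - Fl l 1) < 1
      rw [div_lt_one (by linarith)]
      linarith

lemma exists_fixed_point {l : List Bool} (hf : false ∈ l) (ht : true ∈ l) :
    ∃ α : ℝ, 0 < α ∧ α < 1 ∧ Fl l α = α := by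
  set g : ℝ → ℝ := fun x => Fl l x - x with hg
  have hcont : ContinuousOn g (Set.Icc (0:ℝ) 1) :=
    (Fl_contOn l).sub continuousOn_id
  have hg0 : 0 < g 0 := by simpa [hg] using Fl_zero_pos ht
  have hg1 : g 1 < 0 := by simpa [hg] using Fl_one_lt hf
  have hsub := intermediate_value_Icc' (by norm_num : (0:ℝ) ≤ 1) hcont
  have h0mem : (0:ℝ) ∈ Set.Icc (g 1) (g 0) := ⟨le_of_lt hg1, le_of_lt hg0⟩
  obtain ⟨α, hα, hgα⟩ := hsub h0mem
  have hne0 : α ≠ 0 := by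
    intro he; rw [he] at hgα; rw [hgα] at hg0; exact lt_irrefl 0 hg0
  have hne1 : α ≠ 1 := by
    intro he; rw [he] at hgα; rw [hgα] at hg1; exact lt_irrefl 0 hg1
  exact ⟨α, lt_of_le_of_ne hα.1 (Ne.symm hne0), lt_of_le_of_ne hα.2 hne1,
    by have : Fl l α - α = 0 := hgα; linarith⟩

/-! ### Rational points are not fixed -/

def fq : Bool → ℚ → ℚ
  | false, x => x / (1 + x)
  | true, x => 1 / (2 - x)

def Flq (l : List Bool) (x : ℚ) : ℚ := l.foldr (fun i y => fq i y) x

@[simp] lemma Flq_cons (i : Bool) (l : List Bool) (x : ℚ) :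
    Flq (i :: l) x = fq i (Flq l x) := rfl

lemma fq_cast (i : Bool) {q : ℚ} (h0 : 0 < q) (h1 : q < 1) :
    ((fq i q : ℚ) : ℝ) = fmap i (q : ℝ) := by
  cases i
  · show ((q / (1 + q) : ℚ) : ℝ) = (q : ℝ) / (1 + (q : ℝ))
    push_cast
    ring
  · show ((1 / (2 - q) : ℚ) : ℝ) = 1 / (2 - (q : ℝ))
    push_cast
    ring

lemma fq_pos (i : Bool) {q : ℚ} (h0 : 0 < q) (h1 : q < 1) : 0 < fq i q := by
  cases i
  · show 0 < q / (1 + q); positivity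
  · show 0 < 1 / (2 - q)
    have : (0:ℚ) < 2 - q := by linarith
    positivity

lemma fq_lt_one (i : Bool) {q : ℚ} (h0 : 0 < q) (h1 : q < 1) : fq i q < 1 := by
  cases i
  · show q / (1 + q) < 1
    rw [div_lt_one (by linarith)]; linarith
  · show 1 / (2 - q) < 1
    rw [div_lt_one (by linarith)]; linarith

lemma fq_den (i : Bool) {q : ℚ} (h0 : 0 < q) (h1 : q < 1) :
    (q.den : ℤ) < ((fq i q).den : ℤ) := by
  have hden : (0:ℚ) < (q.den : ℚ) := by exact_mod_cast q.pos
  have hnum : (q.num : ℚ) = q * (q.den : ℚ) := by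
    have h := Rat.num_div_den q
    rw [div_eq_iff hden.ne'] at h
    exact h.symm ▸ rfl
  have hnum_pos : 0 < q.num := Rat.num_pos.mpr h0
  have hnum_lt : q.num < (q.den : ℤ) := by
    have : (q.num : ℚ) < (q.den : ℚ) := by rw [hnum]; nlinarith
    exact_mod_cast this
  cases i
  · -- q/(1+q) = q.num / (q.num + q.den)
    have hb : (0:ℤ) < q.num + (q.den : ℤ) := by positivity
    have heq : fq false q = (q.num : ℚ) / ((q.num + (q.den:ℤ) : ℤ) : ℚ) := by
      show q / (1 + q) = _
      rw [div_eq_div_iff (by linarith) (by exact_mod_cast hb.ne')]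
      push_cast
      nlinarith [hnum]
    have hcop : Nat.Coprime q.num.natAbs (q.num + (q.den:ℤ)).natAbs := by
      have h1 : IsCoprime q.num (q.den : ℤ) := by
        rw [Int.isCoprime_iff_gcd_eq_one]
        exact q.reduced
      have h2 : IsCoprime q.num (q.num + (q.den:ℤ)) := by
        have := h1.add_mul_left_right 1
        have h3 : (q.den:ℤ) + q.num * 1 = q.num + (q.den:ℤ) := by ring
        rwa [h3] at this
      exact Int.isCoprime_iff_gcd_eq_one.mp h2
    have := Rat.den_div_eq_of_coprime hb hcop
    rw [heq, this]
    omega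
  · -- 1/(2-q) = q.den / (2*q.den - q.num)
    have hb : (0:ℤ) < 2 * (q.den : ℤ) - q.num := by omega
    have heq : fq true q = ((q.den : ℤ) : ℚ) / ((2 * (q.den:ℤ) - q.num : ℤ) : ℚ) := by
      show 1 / (2 - q) = _
      rw [div_eq_div_iff (by linarith) (by exact_mod_cast hb.ne')]
      push_cast
      nlinarith [hnum]
    have hcop : Nat.Coprime (q.den : ℤ).natAbs (2 * (q.den:ℤ) - q.num).natAbs := by
      have h1 : IsCoprime (q.den : ℤ) q.num := by
        rw [Int.isCoprime_iff_gcd_eq_one]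
        exact Nat.Coprime.symm q.reduced
      have h2 : IsCoprime (q.den : ℤ) (2 * (q.den:ℤ) - q.num) := by
        have := (h1.neg_right).add_mul_left_right 2
        have h3 : -q.num + (q.den : ℤ) * 2 = 2 * (q.den:ℤ) - q.num := by ring
        rwa [h3] at this
      exact Int.isCoprime_iff_gcd_eq_one.mp h2
    have := Rat.den_div_eq_of_coprime hb hcop
    rw [heq, this]
    omega

lemma Flq_props (l : List Bool) {q : ℚ} (h0 : 0 < q) (h1 : q < 1) :
    (0 < Flq l q ∧ Flq l q < 1) ∧ ((Flq l q : ℚ) : ℝ) = Fl l (q : ℝ)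
      ∧ (q.den : ℤ) ≤ ((Flq l q).den : ℤ)
      ∧ (l ≠ [] → (q.den : ℤ) < ((Flq l q).den : ℤ)) := by
  induction l with
  | nil => exact ⟨⟨h0, h1⟩, rfl, le_refl _, fun h => absurd rfl h⟩
  | cons i l ih =>
    obtain ⟨⟨hy0, hy1⟩, hcast, hle, _⟩ := ih
    refine ⟨⟨fq_pos i hy0 hy1, fq_lt_one i hy0 hy1⟩, ?_, ?_, fun _ => ?_⟩
    · rw [Flq_cons, fq_cast i hy0 hy1, hcast, Fl_cons]
    · have := fq_den i hy0 hy1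
      rw [Flq_cons]
      omega
    · have := fq_den i hy0 hy1
      rw [Flq_cons]
      omega

lemma irrational_of_fixed {l : List Bool} {α : ℝ} (hl : l ≠ [])
    (h0 : 0 < α) (h1 : α < 1) (hfix : Fl l α = α) : Irrational α := by
  intro ⟨q, hq⟩
  have hq0 : 0 < q := by
    have : ((0:ℚ):ℝ) < (q:ℝ) := by rw [hq]; exact_mod_cast h0
    exact_mod_cast this
  have hq1 : q < 1 := by
    have : (q:ℝ) < ((1:ℚ):ℝ) := by rw [hq]; exact_mod_cast h1
    exact_mod_cast this
  obtain ⟨_, hcast, _, hlt⟩ := Flq_props l hq0 hq1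
  have : ((Flq l q : ℚ) : ℝ) = (q : ℝ) := by rw [hcast, hq, hfix]
  have heq : Flq l q = q := by exact_mod_cast this
  have := hlt hl
  rw [heq] at this
  omega
/-! ### Integer-pair dynamics for quadratic surds -/

noncomputable def yv (D : ℤ) (p : ℤ × ℤ) : ℝ :=
  ((p.1 : ℝ) + Real.sqrt (D : ℝ)) / (p.2 : ℝ)

noncomputable def yvc (D : ℤ) (p : ℤ × ℤ) : ℝ :=
  ((p.1 : ℝ) - Real.sqrt (D : ℝ)) / (p.2 : ℝ)

/-- Back to the `x`-coordinate. -/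
noncomputable def xv (D : ℤ) (p : ℤ × ℤ) : ℝ := yv D p / (1 + yv D p)

open Classical in
noncomputable def stepPQ (D : ℤ) (p : ℤ × ℤ) : ℤ × ℤ :=
  if 1 < yv D p then (p.1 - p.2, p.2)
  else (p.1 + (D - p.1 ^ 2) / p.2, p.2 - 2 * p.1 - (D - p.1 ^ 2) / p.2)

def GoodPQ (D : ℤ) (p : ℤ × ℤ) : Prop :=
  0 < p.2 ∧ p.1 ^ 2 < D ∧ p.2 ∣ D - p.1 ^ 2

section PQ

variable {D : ℤ} (hD : Irrational (Real.sqrt (D : ℝ)))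

lemma D_pos {p : ℤ × ℤ} (hg : GoodPQ D p) : 0 < D :=
  lt_of_le_of_lt (sq_nonneg _) hg.2.1

lemma sqrtD_sq {p : ℤ × ℤ} (hg : GoodPQ D p) :
    Real.sqrt (D : ℝ) ^ 2 = (D : ℝ) :=
  Real.sq_sqrt (by exact_mod_cast (D_pos hg).le)

lemma abs_lt_sqrtD {p : ℤ × ℤ} (hg : GoodPQ D p) :
    -(Real.sqrt (D : ℝ)) < (p.1 : ℝ) ∧ (p.1 : ℝ) < Real.sqrt (D : ℝ) := by
  have h2 : ((p.1 : ℝ)) ^ 2 < (D : ℝ) := by exact_mod_cast hg.2.1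
  have habs : |(p.1 : ℝ)| < Real.sqrt (D : ℝ) := by
    rw [← Real.sqrt_sq_eq_abs]
    exact Real.sqrt_lt_sqrt (sq_nonneg _) h2
  exact abs_lt.mp habs

lemma yv_pos {p : ℤ × ℤ} (hg : GoodPQ D p) : 0 < yv D p := by
  have h := abs_lt_sqrtD hg
  have hQ : (0:ℝ) < (p.2 : ℝ) := by exact_mod_cast hg.1
  apply div_pos _ hQ
  linarith [h.1]

lemma yvc_neg {p : ℤ × ℤ} (hg : GoodPQ D p) : yvc D p < 0 := by
  have h := abs_lt_sqrtD hg
  have hQ : (0:ℝ) < (p.2 : ℝ) := by exact_mod_cast hg.1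
  apply div_neg_of_neg_of_pos _ hQ
  linarith [h.2]

include hD in
lemma yv_irrational {p : ℤ × ℤ} (hg : GoodPQ D p) : Irrational (yv D p) :=
  (hD.intCast_add p.1).div_intCast hg.1.ne'

include hD in
lemma yv_inj {p q : ℤ × ℤ} (hgp : GoodPQ D p) (hgq : GoodPQ D q)
    (h : yv D p = yv D q) : p = q := by
  have hQp : (0:ℝ) < (p.2 : ℝ) := by exact_mod_cast hgp.1
  have hQq : (0:ℝ) < (q.2 : ℝ) := by exact_mod_cast hgq.1
  rw [yv, yv, div_eq_div_iff hQp.ne' hQq.ne'] at h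
  set s := Real.sqrt (D : ℝ) with hs
  have key : ((p.1 * q.2 - q.1 * p.2 : ℤ) : ℝ) = ((p.2 - q.2 : ℤ) : ℝ) * s := by
    push_cast
    nlinarith [h]
  by_cases hqq : p.2 - q.2 = 0
  · have h2 : p.2 = q.2 := by omega
    have h0 : ((p.1 * q.2 - q.1 * p.2 : ℤ) : ℝ) = 0 := by
      rw [key]
      norm_num [hqq]
    have h3 : p.1 * q.2 - q.1 * p.2 = 0 := by exact_mod_cast h0
    have h1 : p.1 = q.1 := by
      rw [h2] at h3
      have hq2 : q.2 ≠ 0 := hgq.1.ne'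
      have h4 : (p.1 - q.1) * q.2 = 0 := by linarith [h3]
      rcases mul_eq_zero.mp h4 with h | h
      · omega
      · omega
    exact Prod.ext h1 h2
  · exfalso
    apply hD
    refine ⟨((p.1 * q.2 - q.1 * p.2 : ℤ) : ℚ) / ((p.2 - q.2 : ℤ) : ℚ), ?_⟩
    have hne : ((p.2 : ℝ) - (q.2 : ℝ)) ≠ 0 := by
      intro hcon
      apply hqq
      have : ((p.2 - q.2 : ℤ) : ℝ) = 0 := by push_cast; linarith
      exact_mod_cast this
    push_cast
    rw [div_eq_iff hne]
    push_cast at key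
    linarith [key]

include hD in
lemma stepPQ_spec {p : ℤ × ℤ} (hg : GoodPQ D p) :
    GoodPQ D (stepPQ D p) ∧
    (1 < yv D p →
      yv D (stepPQ D p) = yv D p - 1 ∧ yvc D (stepPQ D p) = yvc D p - 1) ∧
    (¬ 1 < yv D p →
      yv D (stepPQ D p) = yv D p / (1 - yv D p) ∧
      yvc D (stepPQ D p) = yvc D p / (1 - yvc D p)) := by
  obtain ⟨hQ, hP, hdvd⟩ := hg
  have hgg : GoodPQ D p := ⟨hQ, hP, hdvd⟩
  set P := p.1 with hPdef
  set Q := p.2 with hQdef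
  set s := Real.sqrt (D : ℝ) with hs
  have hQR : (0:ℝ) < (Q : ℝ) := by exact_mod_cast hQ
  have hs2 : s ^ 2 = (D : ℝ) := sqrtD_sq hgg
  have habs := abs_lt_sqrtD hgg
  have hs0 : 0 < s := by rcases habs with ⟨h1, h2⟩; linarith
  by_cases hb : 1 < yv D p
  · have hstep : stepPQ D p = (P - Q, Q) := by
      unfold stepPQ
      rw [if_pos hb]
    have hyv1 : (Q : ℝ) < (P : ℝ) + s := by
      have := (one_lt_div hQR).mp hb
      linarith [this]
    have hy : yv D (stepPQ D p) = yv D p - 1 := by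
      rw [hstep]
      show (((P - Q : ℤ) : ℝ) + s) / (Q : ℝ) = ((P:ℝ) + s) / (Q:ℝ) - 1
      field_simp
      push_cast
      ring
    have hyc : yvc D (stepPQ D p) = yvc D p - 1 := by
      rw [hstep]
      show (((P - Q : ℤ) : ℝ) - s) / (Q : ℝ) = ((P:ℝ) - s) / (Q:ℝ) - 1
      field_simp
      push_cast
      ring
    have hgood : GoodPQ D (stepPQ D p) := by
      rw [hstep]
      refine ⟨hQ, ?_, ?_⟩
      · have hr : (((P - Q : ℤ)) : ℝ) ^ 2 < (D : ℝ) := by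
          push_cast
          nlinarith [habs.2, hyv1, hs2]
        exact_mod_cast hr
      · show Q ∣ D - (P - Q)^2
        have hEq : D - (P - Q)^2 = (D - P^2) + Q * (2*P - Q) := by ring
        rw [hEq]
        exact dvd_add hdvd (Dvd.intro _ rfl)
    exact ⟨hgood, fun _ => ⟨hy, hyc⟩, fun h => absurd hb h⟩
  · -- branch false
    have hlt : yv D p < 1 :=
      lt_of_le_of_ne (not_lt.mp hb) ((yv_irrational hD hgg).ne_one)
    set e := (D - P ^ 2) / Q with hedef
    have he : Q * e = D - P ^ 2 := Int.mul_ediv_cancel' hdvd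
    have hDP : 0 < D - P ^ 2 := by omega
    have hepos : 0 < e := by nlinarith [he, hQ, hDP]
    have hstep : stepPQ D p = (P + e, Q - 2 * P - e) := by
      unfold stepPQ
      rw [if_neg hb]
    have hPQs : (P : ℝ) + s < (Q : ℝ) := by
      have := (div_lt_one hQR).mp hlt
      linarith [this]
    have hQP : s < (Q : ℝ) - P := by linarith
    have hQ'key : (Q - 2*P - e) * Q = (Q - P)^2 - D := by linear_combination -he
    have hQPD : D < (Q - P)^2 := by
      have hr : (D : ℝ) < ((Q - P : ℤ) : ℝ)^2 := by
        push_cast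
        nlinarith [hQP, hs0, hs2]
      exact_mod_cast hr
    have hQ' : 0 < Q - 2*P - e := by nlinarith [hQ'key, hQ, hQPD]
    have hPe : (P + e)^2 - D = -(e * (Q - 2*P - e)) := by linear_combination he
    have heR : (Q : ℝ) * (e : ℝ) = (D : ℝ) - (P : ℝ)^2 := by exact_mod_cast he
    have hQ'R : (0:ℝ) < ((Q - 2*P - e : ℤ) : ℝ) := by exact_mod_cast hQ'
    have hdenp : (0:ℝ) < (Q : ℝ) - P - s := by linarith
    have hdenc : (0:ℝ) < (Q : ℝ) - P + s := by linarith
    -- yv equation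
    have hy : yv D (stepPQ D p) = yv D p / (1 - yv D p) := by
      rw [hstep]
      show (((P + e : ℤ) : ℝ) + s) / ((Q - 2*P - e : ℤ) : ℝ)
          = (((P:ℝ) + s) / (Q:ℝ)) / (1 - ((P:ℝ) + s) / (Q:ℝ))
      have hone : 1 - ((P:ℝ) + s) / (Q:ℝ) = ((Q:ℝ) - P - s) / (Q:ℝ) := by
        field_simp
        try ring
      have hXne : (1:ℝ) - ((P:ℝ) + s) / (Q:ℝ) ≠ 0 := by
        rw [hone]; exact (div_pos hdenp hQR).ne'
      have h2 : (((P:ℝ) + s) / (Q:ℝ)) / (1 - ((P:ℝ) + s) / (Q:ℝ))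
          = ((P:ℝ) + s) / ((Q:ℝ) - P - s) := by
        rw [div_eq_div_iff hXne hdenp.ne', hone]
        field_simp
        try ring
      rw [h2, div_eq_div_iff hQ'R.ne' hdenp.ne']
      push_cast
      linear_combination heR - hs2 + ((Q:ℝ) - 2*P - e) * hs2 * 0
    have hyc : yvc D (stepPQ D p) = yvc D p / (1 - yvc D p) := by
      rw [hstep]
      show (((P + e : ℤ) : ℝ) - s) / ((Q - 2*P - e : ℤ) : ℝ)
          = (((P:ℝ) - s) / (Q:ℝ)) / (1 - ((P:ℝ) - s) / (Q:ℝ))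
      have hone : 1 - ((P:ℝ) - s) / (Q:ℝ) = ((Q:ℝ) - P + s) / (Q:ℝ) := by
        field_simp
        try ring
      have hXne : (1:ℝ) - ((P:ℝ) - s) / (Q:ℝ) ≠ 0 := by
        rw [hone]; exact (div_pos hdenc hQR).ne'
      have h2 : (((P:ℝ) - s) / (Q:ℝ)) / (1 - ((P:ℝ) - s) / (Q:ℝ))
          = ((P:ℝ) - s) / ((Q:ℝ) - P + s) := by
        rw [div_eq_div_iff hXne hdenc.ne', hone]
        field_simp
        try ring
      rw [h2, div_eq_div_iff hQ'R.ne' hdenc.ne']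
      push_cast
      linear_combination heR - hs2
    have hgood : GoodPQ D (stepPQ D p) := by
      rw [hstep]
      refine ⟨hQ', ?_, ?_⟩
      · show (P + e)^2 < D
        nlinarith [hPe, hepos, hQ']
      · show (Q - 2*P - e) ∣ D - (P + e)^2
        exact ⟨e, by linarith [hPe]⟩
    exact ⟨hgood, fun h => absurd h hb, fun _ => ⟨hy, hyc⟩⟩

include hD in
lemma backstep {p q : ℤ × ℤ} (hgp : GoodPQ D p) (hgq : GoodPQ D q)
    (h : stepPQ D p = stepPQ D q) : p = q := by
  obtain ⟨_, hpT, hpF⟩ := stepPQ_spec hD hgp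
  obtain ⟨_, hqT, hqF⟩ := stepPQ_spec hD hgq
  have hcp := yvc_neg hgp
  have hcq := yvc_neg hgq
  by_cases bp : 1 < yv D p <;> by_cases bq : 1 < yv D q
  · -- both true:  pairs determined
    have h1 : (p.1 - p.2, p.2) = (q.1 - q.2, q.2) := by
      have e1 : stepPQ D p = (p.1 - p.2, p.2) := by unfold stepPQ; rw [if_pos bp]
      have e2 : stepPQ D q = (q.1 - q.2, q.2) := by unfold stepPQ; rw [if_pos bq]
      rw [← e1, ← e2, h]
    have h2 := congrArg Prod.fst h1
    have h3 := congrArg Prod.snd h1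
    simp only at h2 h3
    exact Prod.ext (by omega) h3
  · exfalso
    have e1 := (hpT bp).2
    have e2 := (hqF bq).2
    rw [h] at e1
    rw [e1] at e2
    -- yvc p − 1 = yvc q/(1−yvc q), LHS < −1, RHS > −1
    have h1q : (0:ℝ) < 1 - yvc D q := by linarith
    have hkey : yvc D q / (1 - yvc D q) + 1 = 1 / (1 - yvc D q) := by
      field_simp
      ring
    have hq1 : -1 < yvc D q / (1 - yvc D q) := by
      have := one_div_pos.mpr h1q
      linarith [hkey]
    linarith
  · exfalso
    have e1 := (hqT bq).2
    have e2 := (hpF bp).2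
    rw [← h] at e1
    rw [e1] at e2
    have h1q : (0:ℝ) < 1 - yvc D p := by linarith
    have hkey : yvc D p / (1 - yvc D p) + 1 = 1 / (1 - yvc D p) := by
      field_simp
      ring
    have hq1 : -1 < yvc D p / (1 - yvc D p) := by
      have := one_div_pos.mpr h1q
      linarith [hkey]
    linarith
  · -- both false
    have e1 := (hpF bp).1
    have e2 := (hqF bq).1
    rw [h, e2] at e1
    -- yv q/(1−yv q) = yv p/(1−yv p)  ⇒ yv p = yv q
    have hp1 : yv D p < 1 := lt_of_le_of_ne (not_lt.mp bp) (yv_irrational hD hgp).ne_one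
    have hq1 : yv D q < 1 := lt_of_le_of_ne (not_lt.mp bq) (yv_irrational hD hgq).ne_one
    have : yv D p = yv D q := by
      have hne1 : (1:ℝ) - yv D p ≠ 0 := by linarith
      have hne2 : (1:ℝ) - yv D q ≠ 0 := by linarith
      rw [div_eq_div_iff hne2 hne1] at e1
      nlinarith [e1]
    exact yv_inj hD hgp hgq this

end PQ
section PQ2

variable {D : ℤ} (hD : Irrational (Real.sqrt (D : ℝ)))

lemma xv_pos {p : ℤ × ℤ} (hg : GoodPQ D p) : 0 < xv D p := by
  have hy := yv_pos hg
  rw [xv]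
  positivity

lemma xv_lt_one {p : ℤ × ℤ} (hg : GoodPQ D p) : xv D p < 1 := by
  have hy := yv_pos hg
  rw [xv, div_lt_one (by linarith)]
  linarith

open Classical in
include hD in
lemma xrel {p : ℤ × ℤ} (hg : GoodPQ D p) :
    xv D p = fmap (if 1 < yv D p then true else false) (xv D (stepPQ D p)) := by
  obtain ⟨hgood, hT, hF⟩ := stepPQ_spec hD hg
  by_cases hb : 1 < yv D p
  · rw [if_pos hb]
    have hy' : 0 < yv D (stepPQ D p) := yv_pos hgood
    have heq : yv D p = yv D (stepPQ D p) + 1 := by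
      have := (hT hb).1
      linarith
    show xv D p = 1 / (2 - xv D (stepPQ D p))
    rw [xv, xv, heq]
    set t := yv D (stepPQ D p) with ht
    have h1 : (0:ℝ) < 1 + t := by linarith
    have h2 : 2 - t / (1 + t) = (2 + t) / (1 + t) := by
      field_simp
      try ring
    rw [h2, one_div_div, div_eq_div_iff (by linarith) (by linarith)]
    ring
  · rw [if_neg hb]
    have ha1 : yv D p < 1 :=
      lt_of_le_of_ne (not_lt.mp hb) (yv_irrational hD hg).ne_one
    have ha0 : 0 < yv D p := yv_pos hg
    have hne : (1:ℝ) - yv D p ≠ 0 := by linarith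
    have h1 : xv D (stepPQ D p) = yv D p := by
      rw [xv, (hF hb).1]
      have hsum : 1 + yv D p / (1 - yv D p) = 1 / (1 - yv D p) := by
        field_simp
        ring
      rw [hsum]
      field_simp

    show xv D p = xv D (stepPQ D p) / (1 + xv D (stepPQ D p))
    rw [h1, xv]

include hD in
lemma exists_periodic_word (p₀ : ℤ × ℤ) (hg : GoodPQ D p₀) :
    ∃ l : List Bool, l ≠ [] ∧ Fl l (xv D p₀) = xv D p₀ := by
  classical
  set pseq : ℕ → ℤ × ℤ := fun k => (stepPQ D)^[k] p₀ with hpseq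
  have hstep : ∀ k, pseq (k + 1) = stepPQ D (pseq k) := fun k =>
    Function.iterate_succ_apply' _ _ _
  have good : ∀ k, GoodPQ D (pseq k) := by
    intro k
    induction k with
    | zero => exact hg
    | succ k ih => rw [hstep]; exact (stepPQ_spec hD ih).1
  set b : ℕ → Bool := fun k => if 1 < yv D (pseq k) then true else false with hb
  have hxrel : ∀ k, xv D (pseq k) = fmap (b k) (xv D (pseq (k + 1))) := by
    intro k
    rw [hstep k]
    exact xrel hD (good k)
  -- the chain lemma
  have hchain : ∀ j : ℕ, Fl ((List.range j).map b) (xv D (pseq j)) = xv D (pseq 0) := by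
    intro j
    induction j with
    | zero => rfl
    | succ j ih =>
      rw [List.range_succ, List.map_append, Fl_append]
      show Fl ((List.range j).map b) (Fl [b j] (xv D (pseq (j + 1)))) = _
      have : Fl [b j] (xv D (pseq (j + 1))) = fmap (b j) (xv D (pseq (j + 1))) := rfl
      rw [this, ← hxrel j, ih]
  -- pigeonhole
  set S : Finset (ℤ × ℤ) := Finset.Icc (-D, 1) (D, D) with hS
  have hmem : ∀ k : ℕ, pseq k ∈ S := by
    intro k
    obtain ⟨h1, h2, h3⟩ := good k
    have hD0 : 0 < D := D_pos (good k)
    have hsq : (0:ℤ) ≤ (pseq k).1 ^ 2 := sq_nonneg _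
    have hb1 : -D ≤ (pseq k).1 := by nlinarith
    have hb2 : (pseq k).1 ≤ D := by nlinarith
    have hq2 : (pseq k).2 ≤ D := by
      have hle := Int.le_of_dvd (by omega) h3
      nlinarith
    simp only [hS, Finset.mem_Icc, Prod.le_def]
    exact ⟨⟨hb1, h1⟩, hb2, hq2⟩
  obtain ⟨j, hj, k, hk, hjk, heq⟩ :=
    Finset.exists_ne_map_eq_of_card_lt_of_maps_to
      (s := Finset.range (S.card + 1)) (t := S)
      (by simp) (fun i _ => hmem i)
  -- wlog j < k
  obtain ⟨j, k, hlt, heq⟩ : ∃ j k : ℕ, j < k ∧ pseq j = pseq k := by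
    rcases Ne.lt_or_gt hjk with h | h
    · exact ⟨j, k, h, heq⟩
    · exact ⟨k, j, h, heq.symm⟩
  -- descent
  have desc : ∀ j k : ℕ, pseq j = pseq k → pseq 0 = pseq (k - j) := by
    intro j
    induction j with
    | zero => intro k h; simpa using h
    | succ j ih =>
      intro k h
      cases k with
      | zero => simp
      | succ k' =>
        rw [hstep j, hstep k'] at h
        have := backstep hD (good j) (good k') h
        have h2 := ih k' this
        simpa using h2
  have hper : pseq 0 = pseq (k - j) := desc j k heq
  set m := k - j with hm
  have hm1 : 1 ≤ m := by omega
  refine ⟨(List.range m).map b, ?_, ?_⟩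
  · intro hcon
    have := congrArg List.length hcon
    simp at this
    omega
  · have := hchain m
    rw [← hper] at this
    have h0 : pseq 0 = p₀ := rfl
    rw [h0] at this
    exact this

end PQ2

set_option maxHeartbeats 1000000 in
/-- (i) For every Sturm number `α` there is a non-identity
`ψ ∈ ⟨ψ₄, ψ₇⟩` fixing `s'_{α,0}`. (ii) Conversely, every composition of `ψ₄`'s
and `ψ₇`'s containing both generators (here `false` encodes `ψ₄` and `true`
encodes `ψ₇`) fixes `s'_{α,0}` for some irrational `α ∈ (0,1)`. -/
theorem psi47_and_ceiling_words :
    (∀ α : ℝ, Irrational α → 0 < α → α < 1 →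
      ∀ b c : ℚ, α ^ 2 = (b : ℝ) * α + (c : ℝ) →
        ((b : ℝ) - α < 0 ∨ 1 < (b : ℝ) - α) →
        ∃ ψ : Morph, (∃ l : List Bool, ψ = compAll g47 l) ∧ ψ ≠ idm ∧
          Fixes ψ (sw' α 0)) ∧
    (∀ l : List Bool, false ∈ l → true ∈ l →
      ∃ α : ℝ, Irrational α ∧ 0 < α ∧ α < 1 ∧ Fixes (compAll g47 l) (sw' α 0)) := by
  constructor
  · -- part (i)
    intro α hirr h0 h1 b c hquad hconj
    have hane1 : (1:ℝ) - α ≠ 0 := sub_ne_zero.mpr (Ne.symm hirr.ne_one)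
    set ab : ℝ := (b:ℝ) - α with hab
    have habirr : Irrational ab := hirr.ratCast_sub (q := b)
    have habne1 : (1:ℝ) - ab ≠ 0 := sub_ne_zero.mpr (Ne.symm habirr.ne_one)
    set y0 : ℝ := α / (1 - α) with hy0
    set yb : ℝ := ab / (1 - ab) with hyb
    have h1a : (0:ℝ) < 1 - α := by linarith
    have hy0pos : 0 < y0 := div_pos h0 h1a
    have hy0val : y0 * (1 - α) = α := div_mul_cancel₀ _ hane1
    have hy0irr : Irrational y0 := by
      rintro ⟨q, hq⟩
      apply hirr
      have hq0 : 0 < q := by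
        have : (0:ℝ) < (q:ℝ) := hq ▸ hy0pos
        exact_mod_cast this
      refine ⟨q / (1 + q), ?_⟩
      have hq1 : ((1:ℝ) + (q:ℝ)) ≠ 0 := by positivity
      push_cast
      rw [div_eq_iff hq1]
      rw [← hq] at hy0val
      nlinarith [hy0val]
    have hybneg : yb < 0 := by
      rcases hconj with h | h
      · exact div_neg_of_neg_of_pos h (by rw [hab]; linarith)
      · exact div_neg_of_pos_of_neg (by rw [hab]; linarith) (by rw [hab]; linarith)
    -- quadratic equations for y0 and yb
    have hYq : ((1:ℝ) - b - c) * y0 ^ 2 - ((b:ℝ) + 2*c) * y0 - (c:ℝ) = 0 := by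
      rw [hy0]
      field_simp
      linear_combination hquad
    have hYbq : ((1:ℝ) - b - c) * yb ^ 2 - ((b:ℝ) + 2*c) * yb - (c:ℝ) = 0 := by
      rw [hyb, hab]
      have habne1' : (1:ℝ) - ((b:ℝ) - α) ≠ 0 := by rw [← hab]; exact habne1
      field_simp
      linear_combination hquad
    have hy0yb : y0 ≠ yb := ne_of_gt (lt_trans hybneg hy0pos)
    have hsum : ((1:ℝ) - b - c) * (y0 + yb) = (b:ℝ) + 2*c := by
      have hfac : (y0 - yb) * (((1:ℝ) - b - c) * (y0 + yb) - ((b:ℝ) + 2*c)) = 0 := by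
        linear_combination hYq - hYbq
      rcases mul_eq_zero.mp hfac with h | h
      · exact absurd (by linarith : y0 = yb) hy0yb
      · linarith
    have hprod : ((1:ℝ) - b - c) * (y0 * yb) = -(c:ℝ) := by
      linear_combination y0 * hsum - hYq
    -- rational coefficients
    set AQ : ℚ := 1 - b - c with hAQ
    set BQ : ℚ := b + 2*c with hBQ
    set CQ : ℚ := c with hCQ
    have hAQcast : ((AQ:ℚ):ℝ) = (1:ℝ) - b - c := by rw [hAQ]; push_cast; ring
    have hBQcast : ((BQ:ℚ):ℝ) = (b:ℝ) + 2*c := by rw [hBQ]; push_cast; ring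
    have hCQcast : ((CQ:ℚ):ℝ) = (c:ℝ) := by rw [hCQ]
    have hAQ0 : AQ ≠ 0 := by
      intro hA0
      have hA0R : ((1:ℝ) - b - c) = 0 := by rw [← hAQcast, hA0]; simp
      have hB0R : ((b:ℝ) + 2*c) = 0 := by rw [← hsum, hA0R]; ring
      have hC0R : (c:ℝ) = 0 := by
        have := hYq
        rw [hA0R, hB0R] at this
        linarith
      have hb0 : (b:ℝ) = 0 := by linarith
      have : α ^ 2 = 0 := by rw [hquad, hb0, hC0R]; ring
      exact hirr.ne_zero (by nlinarith [this])
    -- integers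
    set G : ℤ := (AQ.den : ℤ) * BQ.den * CQ.den with hG
    set a : ℤ := AQ.num * (BQ.den : ℤ) * (CQ.den : ℤ) with ha
    set bbZ : ℤ := BQ.num * (AQ.den : ℤ) * (CQ.den : ℤ) with hbbZ
    set ccZ : ℤ := CQ.num * (AQ.den : ℤ) * (BQ.den : ℤ) with hccZ
    have hADpos : (0:ℝ) < (AQ.den : ℝ) := by exact_mod_cast AQ.pos
    have hBDpos : (0:ℝ) < (BQ.den : ℝ) := by exact_mod_cast BQ.pos
    have hCDpos : (0:ℝ) < (CQ.den : ℝ) := by exact_mod_cast CQ.pos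
    have hAnum : ((AQ.num : ℤ):ℝ) = ((AQ:ℚ):ℝ) * ((AQ.den:ℕ):ℝ) := by
      rw [Rat.cast_def]; field_simp
    have hBnum : ((BQ.num : ℤ):ℝ) = ((BQ:ℚ):ℝ) * ((BQ.den:ℕ):ℝ) := by
      rw [Rat.cast_def]; field_simp
    have hCnum : ((CQ.num : ℤ):ℝ) = ((CQ:ℚ):ℝ) * ((CQ.den:ℕ):ℝ) := by
      rw [Rat.cast_def]; field_simp
    have e_a : ((a:ℤ):ℝ) = ((AQ:ℚ):ℝ) * ((G:ℤ):ℝ) := by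
      rw [ha, hG]; push_cast [hAnum]; ring
    have e_bb : ((bbZ:ℤ):ℝ) = ((BQ:ℚ):ℝ) * ((G:ℤ):ℝ) := by
      rw [hbbZ, hG]; push_cast [hBnum]; ring
    have e_cc : ((ccZ:ℤ):ℝ) = ((CQ:ℚ):ℝ) * ((G:ℤ):ℝ) := by
      rw [hccZ, hG]; push_cast [hCnum]; ring
    have hGR : (0:ℝ) < ((G:ℤ):ℝ) := by
      rw [hG]; push_cast; positivity
    have haR : ((a:ℤ):ℝ) ≠ 0 := by
      rw [e_a]
      exact mul_ne_zero (Rat.cast_ne_zero.mpr hAQ0) hGR.ne'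
    have ha0 : a ≠ 0 := fun h => haR (by rw [h]; simp)
    have hsum' : ((a:ℤ):ℝ) * (y0 + yb) = ((bbZ:ℤ):ℝ) := by
      rw [e_a, e_bb, hAQcast, hBQcast]
      linear_combination ((G:ℤ):ℝ) * hsum
    have hprod' : ((a:ℤ):ℝ) * (y0 * yb) = -((ccZ:ℤ):ℝ) := by
      rw [e_a, e_cc, hAQcast, hCQcast]
      linear_combination ((G:ℤ):ℝ) * hprod
    have haq : ((a:ℤ):ℝ) * y0^2 - ((bbZ:ℤ):ℝ) * y0 - ((ccZ:ℤ):ℝ) = 0 := by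
      rw [e_a, e_bb, e_cc, hAQcast, hBQcast, hCQcast]
      linear_combination ((G:ℤ):ℝ) * hYq
    have hy0ybneg : y0 * yb < 0 := mul_neg_of_pos_of_neg hy0pos hybneg
    have ha2 : (0:ℝ) < ((a:ℤ):ℝ)^2 :=
      lt_of_le_of_ne (sq_nonneg _) (Ne.symm (pow_ne_zero 2 haR))
    have haccR : ((a:ℤ):ℝ) * ((ccZ:ℤ):ℝ) = -(((a:ℤ):ℝ)^2 * (y0 * yb)) := by
      linear_combination ((a:ℤ):ℝ) * hprod'
    have hacc : 0 < a * ccZ := by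
      have hRR : (0:ℝ) < ((a * ccZ : ℤ):ℝ) := by
        push_cast
        rw [haccR, neg_pos]
        exact mul_neg_of_pos_of_neg ha2 hy0ybneg
      exact_mod_cast hRR
    set D1 : ℤ := bbZ^2 + 4*(a*ccZ) with hD1
    set t : ℝ := 2*((a:ℤ):ℝ)*y0 - ((bbZ:ℤ):ℝ) with htdef
    have ht2 : t^2 = ((D1:ℤ):ℝ) := by
      rw [htdef, hD1]
      push_cast
      linear_combination (4*((a:ℤ):ℝ)) * haq
    have hteq : t = ((a:ℤ):ℝ) * (y0 - yb) := by
      rw [htdef]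
      linear_combination hsum'
    have htirr : Irrational t := by
      have h2a : (2*a : ℤ) ≠ 0 := by omega
      have h1i : Irrational (((2*a:ℤ):ℝ) * y0) := hy0irr.intCast_mul h2a
      have h2i : Irrational (((2*a:ℤ):ℝ) * y0 - ((bbZ:ℤ):ℝ)) := h1i.sub_intCast bbZ
      have ht' : t = ((2*a:ℤ):ℝ)*y0 - ((bbZ:ℤ):ℝ) := by rw [htdef]; push_cast; ring
      rw [ht']
      exact h2i
    have hD1R : Real.sqrt ((D1:ℤ):ℝ) = |t| := by rw [← ht2, Real.sqrt_sq_eq_abs]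
    have hDirr : Irrational (Real.sqrt ((D1:ℤ):ℝ)) := by
      rw [hD1R]
      rcases le_or_gt 0 t with h | h
      · rw [abs_of_nonneg h]; exact htirr
      · rw [abs_of_neg h]; exact htirr.neg
    have hy0yb' : 0 < y0 - yb := by linarith
    obtain ⟨pq, hgood, hyv⟩ : ∃ pq : ℤ × ℤ, GoodPQ D1 pq ∧ yv D1 pq = y0 := by
      rcases lt_or_gt_of_ne ha0 with haneg | hapos
      · have haRneg : ((a:ℤ):ℝ) < 0 := by exact_mod_cast haneg
        have htneg : t < 0 := by
          rw [hteq]; exact mul_neg_of_neg_of_pos haRneg hy0yb'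
        have hst : Real.sqrt ((D1:ℤ):ℝ) = -t := by rw [hD1R, abs_of_neg htneg]
        refine ⟨(-bbZ, -2*a), ⟨?_, ?_, ?_⟩, ?_⟩
        · show (0:ℤ) < -2*a; omega
        · show (-bbZ)^2 < D1
          have : (-bbZ)^2 = bbZ^2 := by ring
          rw [this, hD1]; omega
        · show (-2*a) ∣ D1 - (-bbZ)^2
          exact ⟨-2*ccZ, by rw [hD1]; ring⟩
        · show (((-bbZ : ℤ):ℝ) + Real.sqrt ((D1:ℤ):ℝ)) / (((-2*a:ℤ)):ℝ) = y0
          rw [hst, htdef]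
          have h2aR : (((-2*a:ℤ)):ℝ) ≠ 0 := by
            push_cast
            intro hcon
            apply haR
            linarith
          rw [div_eq_iff h2aR]
          push_cast
          ring
      · have haRpos : (0:ℝ) < ((a:ℤ):ℝ) := by exact_mod_cast hapos
        have htpos : 0 < t := by
          rw [hteq]; exact mul_pos haRpos hy0yb'
        have hst : Real.sqrt ((D1:ℤ):ℝ) = t := by rw [hD1R, abs_of_pos htpos]
        refine ⟨(bbZ, 2*a), ⟨?_, ?_, ?_⟩, ?_⟩
        · show (0:ℤ) < 2*a; omega
        · show bbZ^2 < D1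
          rw [hD1]; omega
        · show (2*a) ∣ D1 - bbZ^2
          exact ⟨2*ccZ, by rw [hD1]; ring⟩
        · show (((bbZ : ℤ):ℝ) + Real.sqrt ((D1:ℤ):ℝ)) / (((2*a:ℤ)):ℝ) = y0
          rw [hst, htdef]
          have h2aR : (((2*a:ℤ)):ℝ) ≠ 0 := by
            push_cast
            intro hcon
            apply haR
            linarith
          rw [div_eq_iff h2aR]
          push_cast
          ring
    have hxvα : xv D1 pq = α := by
      rw [xv, hyv, hy0]
      have hsum2 : 1 + α/(1-α) = 1/(1-α) := by field_simp; ring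
      rw [hsum2]
      field_simp
    obtain ⟨l, hlne, hfixl⟩ := exists_periodic_word hDirr pq hgood
    rw [hxvα] at hfixl
    exact ⟨compAll g47 l, ⟨l, rfl⟩, compAll_ne_idm hlne,
      fixes_of_fixed_point l h0 h1 hfixl⟩
  · -- part (ii)
    intro l hf ht
    obtain ⟨α, h0, h1, hfix⟩ := exists_fixed_point hf ht
    have hlne : l ≠ [] := by
      intro h
      rw [h] at hf
      simp at hf
    exact ⟨α, irrational_of_fixed hlne h0 h1 hfix, h0, h1,
      fixes_of_fixed_point l h0 h1 hfix⟩
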